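/- Let n ≥ 1, H = diag(−(2i−1)/2)_{i=1}^n, D(Θ) = diag(Θ^{−(2i−1)/2})_{i=1}^n for Θ > 0, let F be a symmetric positive definite n×n matrix with F − FH − HF positive definite, let a ∈ ℝⁿ be nonzero, let d > 0, and let 0 < a₀ ≤ d²/(2(F^{−1}a, a)). For x ≠ 0 let Θ(x) be the unique positive solution of 2a₀Θ = (D(Θ)F D(Θ)x, x), and define the control u(x) = Θ(x)^{−1/2}·(a, D(Θ(x))x) = ∑_{k=1}^n a_k x_k / Θ(x)^k. Then |u(x)| ≤ √(2a₀(F^{−1}a, a)) ≤ d for every x ≠ 0. -/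

import Mathlib

open Matrix

/-- Boundedness of the control: if `Θ(x)` is the (unique) positive solution of
`2a₀Θ = (D(Θ)FD(Θ)x, x)` and `0 < a₀ ≤ d²/(2(F⁻¹a, a))`, then the control
`u(x) = Θ(x)^{−1/2}(a, D(Θ(x))x)` satisfies `|u(x)| ≤ √(2a₀(F⁻¹a, a)) ≤ d`. -/
theorem stmt17 (n : ℕ) (hn : 1 ≤ n)
    (H : Matrix (Fin n) (Fin n) ℝ)
    (hH : H = Matrix.diagonal fun i : Fin n => -((2 * (i.val : ℝ) + 1) / 2))
    (D : ℝ → Matrix (Fin n) (Fin n) ℝ)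
    (hD : ∀ Θ : ℝ, 0 < Θ →
      D Θ = Matrix.diagonal fun i : Fin n => Θ ^ (-((2 * (i.val : ℝ) + 1) / 2)))
    (F : Matrix (Fin n) (Fin n) ℝ) (hF : F.PosDef)
    (hFH : (F - F * H - H * F).PosDef)
    (a : Fin n → ℝ) (ha : a ≠ 0) (d : ℝ) (hd : 0 < d)
    (a₀ : ℝ) (ha₀ : 0 < a₀) (ha₀d : a₀ ≤ d ^ 2 / (2 * ((F⁻¹ *ᵥ a) ⬝ᵥ a))) :
    ∀ x : Fin n → ℝ, x ≠ 0 → ∀ Θ : ℝ, 0 < Θ →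
      2 * a₀ * Θ = ((D Θ * F * D Θ) *ᵥ x) ⬝ᵥ x →
      |Θ ^ (-(1 : ℝ) / 2) * (a ⬝ᵥ (D Θ *ᵥ x))| ≤
          Real.sqrt (2 * a₀ * ((F⁻¹ *ᵥ a) ⬝ᵥ a)) ∧
        Real.sqrt (2 * a₀ * ((F⁻¹ *ᵥ a) ⬝ᵥ a)) ≤ d := by
  intro x hx Θ hΘ hEq
  set z : Fin n → ℝ := F⁻¹ *ᵥ a with hz
  set y : Fin n → ℝ := D Θ *ᵥ x with hy
  have hFz : F *ᵥ z = a := by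
    rw [hz, mulVec_mulVec,
      Matrix.mul_nonsing_inv F (isUnit_iff_ne_zero.mpr hF.det_pos.ne'), one_mulVec]
  -- K := (F⁻¹ a) ⬝ a > 0
  have hK : 0 < z ⬝ᵥ a := by
    have := (hF.inv.dotProduct_mulVec_pos ha)
    simpa [star_trivial, dotProduct_comm] using this
  -- F symmetric: (F *ᵥ u) ⬝ᵥ v = u ⬝ᵥ (F *ᵥ v)
  have hsym : ∀ u v : Fin n → ℝ, (F *ᵥ u) ⬝ᵥ v = u ⬝ᵥ (F *ᵥ v) := by
    intro u v
    rw [dotProduct_comm, dotProduct_mulVec, ← mulVec_transpose]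
    have : Fᵀ = F := by
      have := hF.1
      rwa [Matrix.IsHermitian, conjTranspose_eq_transpose_of_trivial] at this
    rw [this, dotProduct_comm]
  -- the quadratic form value (F y, y) equals 2 a₀ Θ
  have hDsym : (D Θ)ᵀ = D Θ := by rw [hD Θ hΘ]; simp [Matrix.diagonal_transpose]
  have hxD : x ᵥ* D Θ = y := by rw [← mulVec_transpose, hDsym, hy]
  have hFyy : (F *ᵥ y) ⬝ᵥ y = 2 * a₀ * Θ := by
    have h1 : (D Θ * F * D Θ) *ᵥ x = D Θ *ᵥ (F *ᵥ y) := by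
      rw [hy, ← mulVec_mulVec, ← mulVec_mulVec]
    rw [hEq, h1, dotProduct_comm (D Θ *ᵥ (F *ᵥ y)) x,
      dotProduct_mulVec x (D Θ), hxD]
    exact dotProduct_comm _ _
  -- Cauchy–Schwarz via discriminant
  have hQ : ∀ t : ℝ, 0 ≤ (z ⬝ᵥ a) * (t * t) + (2 * (a ⬝ᵥ y)) * t + 2 * a₀ * Θ := by
    intro t
    have h0 := hF.posSemidef.dotProduct_mulVec_nonneg (y + t • z)
    have h0' : 0 ≤ (F *ᵥ (y + t • z)) ⬝ᵥ (y + t • z) := by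
      simpa [star_trivial, dotProduct_comm] using h0
    have hcross : (F *ᵥ z) ⬝ᵥ y = a ⬝ᵥ y := by rw [hFz]
    have hcross2 : (F *ᵥ y) ⬝ᵥ z = a ⬝ᵥ y := by rw [hsym, hFz, dotProduct_comm]
    have hzz : (F *ᵥ z) ⬝ᵥ z = z ⬝ᵥ a := by rw [hFz, dotProduct_comm]
    calc 0 ≤ (F *ᵥ (y + t • z)) ⬝ᵥ (y + t • z) := h0'
    _ = (z ⬝ᵥ a) * (t * t) + (2 * (a ⬝ᵥ y)) * t + 2 * a₀ * Θ := by
        rw [mulVec_add, mulVec_smul]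
        simp only [add_dotProduct, dotProduct_add, smul_dotProduct,
          dotProduct_smul, hcross, hcross2, hzz, hFyy, smul_eq_mul]
        ring
  have hdisc := discrim_le_zero hQ
  rw [discrim] at hdisc
  have hCS : (a ⬝ᵥ y) ^ 2 ≤ (z ⬝ᵥ a) * (2 * a₀ * Θ) := by nlinarith
  have hKa : 0 < 2 * a₀ * (z ⬝ᵥ a) := by positivity
  -- statement uses (F⁻¹ *ᵥ a) ⬝ᵥ a = z ⬝ᵥ a
  have habs : |a ⬝ᵥ y| ≤ Real.sqrt ((z ⬝ᵥ a) * (2 * a₀ * Θ)) := by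
    rw [← Real.sqrt_sq_eq_abs]
    exact Real.sqrt_le_sqrt hCS
  have hsqrtΘ : 0 < Real.sqrt Θ := Real.sqrt_pos.mpr hΘ
  have hrpow : Θ ^ (-(1 : ℝ) / 2) = (Real.sqrt Θ)⁻¹ := by
    rw [neg_div, Real.rpow_neg hΘ.le, Real.rpow_div_two_eq_sqrt 1 hΘ.le,
      Real.rpow_one]
  constructor
  · rw [abs_mul, hrpow, abs_of_pos (inv_pos.mpr hsqrtΘ)]
    rw [inv_mul_le_iff₀ hsqrtΘ]
    calc |a ⬝ᵥ y| ≤ Real.sqrt ((z ⬝ᵥ a) * (2 * a₀ * Θ)) := habs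
    _ = Real.sqrt (2 * a₀ * (z ⬝ᵥ a)) * Real.sqrt Θ := by
        rw [← Real.sqrt_mul (by positivity)]
        ring_nf
    _ = Real.sqrt Θ * Real.sqrt (2 * a₀ * (z ⬝ᵥ a)) := by ring
  · have h2 : 2 * a₀ * (z ⬝ᵥ a) ≤ d ^ 2 := by
      rw [le_div_iff₀ (by positivity)] at ha₀d
      nlinarith
    calc Real.sqrt (2 * a₀ * (z ⬝ᵥ a)) ≤ Real.sqrt (d ^ 2) := Real.sqrt_le_sqrt h2
    _ = d := by rw [Real.sqrt_sq hd.le]
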